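/- Let M ≥ 1, R_M = {z ∈ ℂ : |1−z| ≤ M(1−|z|)}, and K_M = (R_M ∩ {Re z ≤ 0}) ∪ {|z| ≤ 1/2}. There exists an absolute constant c > 0 such that: if z ∈ R_M \ K_M, s ∈ [z,1) lies on the segment from z to 1, and s = e^{−λ} with −π/2 ≤ Im(λ) ≤ π/2, then Re(1/λ) ≥ c/(M|1−s|). -/

import Mathlib

open Real

set_option maxHeartbeats 1600000 in
/-- the key geometric lemma giving `Re(1/λ) ≥ c/(M|1−s|)`. -/
theorem re_inv_lambda_lower_bound :
    ∃ c : ℝ, 0 < c ∧ ∀ M : ℝ, 1 ≤ M → ∀ z : ℂ,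
      z ∈ {w : ℂ | ‖1 - w‖ ≤ M * (1 - ‖w‖)} \
          (({w : ℂ | ‖1 - w‖ ≤ M * (1 - ‖w‖)} ∩ {w : ℂ | w.re ≤ 0}) ∪
            Metric.closedBall (0 : ℂ) (1 / 2)) →
      ∀ s : ℂ, s ∈ segment ℝ z 1 → s ≠ 1 →
        ∀ lam : ℂ, s = Complex.exp (-lam) → -(π / 2) ≤ lam.im → lam.im ≤ π / 2 →
          (1 / lam).re ≥ c / (M * ‖1 - s‖) := by
  refine ⟨1/25, by norm_num, ?_⟩
  intro M hM z hz s hseg hs1 lam hlam him1 him2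
  obtain ⟨hz1, hz2⟩ := hz
  simp only [Set.mem_setOf_eq] at hz1
  simp only [Set.mem_union, Set.mem_inter_iff, Set.mem_setOf_eq, Metric.mem_closedBall,
    dist_zero_right, not_or, not_and, not_le] at hz2
  obtain ⟨hz2a, hz2b⟩ := hz2
  have hzre : 0 < z.re := hz2a hz1
  obtain ⟨a, b, ha, hb, hab, hsum⟩ := hseg
  have habC : (a : ℂ) + (b : ℂ) = 1 := by exact_mod_cast hab
  have hseq : s = (a : ℂ) * z + (b : ℂ) := by
    rw [← hsum, Complex.real_smul, Complex.real_smul, mul_one]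
  have h1s : (1 : ℂ) - s = (a : ℂ) * (1 - z) := by
    rw [hseq]; linear_combination -((1 : ℂ) - z) * habC + ((1:ℂ) - z) * habC - habC
  -- norms
  have hM0 : (0:ℝ) < M := lt_of_lt_of_le one_pos hM
  have hd_eq : ‖(1:ℂ) - s‖ = a * ‖(1:ℂ) - z‖ := by
    rw [h1s, norm_mul, Complex.norm_real, Real.norm_eq_abs, abs_of_nonneg ha]
  have hns_le : ‖s‖ ≤ a * ‖z‖ + b := by
    rw [hseq]
    calc ‖(a : ℂ) * z + (b : ℂ)‖ ≤ ‖(a : ℂ) * z‖ + ‖(b : ℂ)‖ := norm_add_le _ _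
      _ = a * ‖z‖ + b := by
        rw [norm_mul, Complex.norm_real, Complex.norm_real, Real.norm_eq_abs,
          Real.norm_eq_abs, abs_of_nonneg ha, abs_of_nonneg hb]
  have hd_le : ‖(1:ℂ) - s‖ ≤ M * (1 - ‖s‖) := by
    have h1 : a * ‖(1:ℂ) - z‖ ≤ a * (M * (1 - ‖z‖)) :=
      mul_le_mul_of_nonneg_left hz1 ha
    have h2 : a * (1 - ‖z‖) ≤ 1 - ‖s‖ := by nlinarith
    rw [hd_eq]
    nlinarith
  set d : ℝ := ‖(1:ℂ) - s‖ with hd_def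
  set r : ℝ := ‖s‖ with hr_def
  clear_value d r
  have hs0 : s ≠ 0 := by rw [hlam]; exact Complex.exp_ne_zero _
  have hr_pos : 0 < r := by rw [hr_def]; exact norm_pos_iff.mpr hs0
  have hd_pos : 0 < d := by
    rw [hd_def, norm_pos_iff, sub_ne_zero]
    exact fun h => hs1 h.symm
  have hr1 : r < 1 := by nlinarith
  have h1r_le_d : 1 - r ≤ d := by
    rw [hd_def, hr_def]
    have := norm_sub_norm_le (1 : ℂ) s
    simp only [norm_one] at this
    linarith
  -- lower bound on r
  have hz_sq : (1/2:ℝ)^2 < z.re^2 + z.im^2 := by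
    have h : (1/2:ℝ)^2 < ‖z‖^2 := by nlinarith [hz2b, norm_nonneg z]
    rwa [Complex.sq_norm, Complex.normSq_apply, ← pow_two, ← pow_two] at h
  have hsre : s.re = a * z.re + b := by rw [hseq]; simp
  have hsim : s.im = a * z.im := by rw [hseq]; simp
  have hr_sq : r^2 = s.re^2 + s.im^2 := by
    rw [hr_def, Complex.sq_norm, Complex.normSq_apply, pow_two, pow_two]
  have hs5 : (1/5 : ℝ) ≤ r^2 := by
    rw [hr_sq, hsre, hsim]
    nlinarith [sq_nonneg (5*b - 1), sq_nonneg (a*z.im), mul_nonneg (mul_nonneg ha hb) hzre.le,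
      mul_le_mul_of_nonneg_left hz_sq.le (sq_nonneg a), sq_nonneg a, sq_nonneg b]
  have h49 : (4/9 : ℝ) ≤ r := by nlinarith
  -- real part of lam
  have hrexp : r = Real.exp (-lam.re) := by
    rw [hr_def, hlam, Complex.norm_exp, Complex.neg_re]
  have hre_eq : lam.re = -Real.log r := by
    rw [hrexp, Real.log_exp]; ring
  have hre_lb : 1 - r ≤ lam.re := by
    have := Real.log_le_sub_one_of_pos hr_pos
    rw [hre_eq]; linarith
  have hre_ub : lam.re ≤ (9/4) * d := by
    have h1 : Real.log r⁻¹ ≤ r⁻¹ - 1 := Real.log_le_sub_one_of_pos (inv_pos.mpr hr_pos)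
    rw [Real.log_inv] at h1
    have h2 : lam.re ≤ r⁻¹ - 1 := by rw [hre_eq]; linarith
    have h3 : r * r⁻¹ = 1 := mul_inv_cancel₀ (ne_of_gt hr_pos)
    have h4 : r⁻¹ ≤ 9/4 := by
      have h5 : ((4:ℝ)/9)⁻¹ = 9/4 := by norm_num
      rw [← h5]
      exact inv_anti₀ (by norm_num) h49
    have e1 : r⁻¹ - 1 = r⁻¹ * (1 - r) := by field_simp
    have e2 : r⁻¹ * (1 - r) ≤ (9/4) * (1 - r) :=
      mul_le_mul_of_nonneg_right h4 (by linarith)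
    have e3 : (9/4) * (1 - r) ≤ (9/4) * d := by linarith
    linarith
  -- imaginary part of lam
  have hsin : s.im = -(r * Real.sin lam.im) := by
    rw [hlam, Complex.exp_im, Complex.neg_re, Complex.neg_im, Real.sin_neg]
    rw [hrexp]; ring
  have hsim_le : |s.im| ≤ d := by
    have h := Complex.abs_im_le_norm ((1:ℂ) - s)
    have h2 : ((1:ℂ) - s).im = -s.im := by simp
    rw [h2, abs_neg] at h
    rwa [hd_def]
  have habs_sin : r * |Real.sin lam.im| ≤ d := by
    have : |s.im| = r * |Real.sin lam.im| := by
      rw [hsin, abs_neg, abs_mul, abs_of_pos hr_pos]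
    linarith [hsim_le, this.symm.le]
  have him_le : |lam.im| ≤ (π/2) * |Real.sin lam.im| := by
    rcases le_or_gt 0 lam.im with h | h
    · have hs := Real.mul_le_sin h him2
      have hpi : 0 < π := Real.pi_pos
      rw [abs_of_nonneg h, abs_of_nonneg (le_trans (mul_nonneg (by positivity) h) hs)]
      have h2 : 2 / π * lam.im * (π/2) ≤ Real.sin lam.im * (π/2) :=
        mul_le_mul_of_nonneg_right hs (by positivity)
      calc lam.im = 2 / π * lam.im * (π/2) := by field_simp
        _ ≤ Real.sin lam.im * (π/2) := h2
        _ = (π/2) * Real.sin lam.im := by ring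
    · have h0 : 0 ≤ -lam.im := by linarith
      have h2 : -lam.im ≤ π/2 := by linarith
      have hs := Real.mul_le_sin h0 h2
      rw [Real.sin_neg] at hs
      have hpi : 0 < π := Real.pi_pos
      have hsn : Real.sin lam.im ≤ 0 := by
        have hx := le_trans (mul_nonneg (by positivity : (0:ℝ) ≤ 2/π) h0) hs
        linarith
      rw [abs_of_neg h, abs_of_nonpos hsn]
      have h3 : 2 / π * (-lam.im) * (π/2) ≤ -Real.sin lam.im * (π/2) :=
        mul_le_mul_of_nonneg_right hs (by positivity)
      calc -lam.im = 2 / π * (-lam.im) * (π/2) := by field_simp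
        _ ≤ -Real.sin lam.im * (π/2) := h3
        _ = (π/2) * -Real.sin lam.im := by ring
  have him_sq : lam.im^2 ≤ 13 * d^2 := by
    have hpi : π < 3.15 := Real.pi_lt_d2
    have hpi0 : 0 < π := Real.pi_pos
    have h1 : lam.im^2 ≤ (π/2)^2 * (Real.sin lam.im)^2 := by
      have := sq_le_sq' (neg_le_of_abs_le him_le) (le_of_abs_le him_le)
      calc lam.im^2 ≤ ((π/2) * |Real.sin lam.im|)^2 := this
        _ = (π/2)^2 * (Real.sin lam.im)^2 := by rw [mul_pow, sq_abs]
    have h2 : r^2 * (Real.sin lam.im)^2 ≤ d^2 := by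
      have h0 : 0 ≤ r * |Real.sin lam.im| := mul_nonneg hr_pos.le (abs_nonneg _)
      have h2a : (r * |Real.sin lam.im|) * (r * |Real.sin lam.im|) ≤ d * d :=
        mul_le_mul habs_sin habs_sin h0 hd_pos.le
      calc r^2 * (Real.sin lam.im)^2
          = (r * |Real.sin lam.im|) * (r * |Real.sin lam.im|) := by
            rw [← sq_abs (Real.sin lam.im)]; ring
        _ ≤ d * d := h2a
        _ = d^2 := by ring
    have hsin2 : (Real.sin lam.im)^2 ≤ 5 * d^2 := by
      have h2b := mul_le_mul_of_nonneg_right hs5 (sq_nonneg (Real.sin lam.im))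
      linarith
    have hpisq : (π/2)^2 ≤ 5/2 := by nlinarith [hpi, hpi0]
    have h3 : (π/2)^2 * (Real.sin lam.im)^2 ≤ (5/2) * (Real.sin lam.im)^2 :=
      mul_le_mul_of_nonneg_right hpisq (sq_nonneg _)
    have h4 : (5/2:ℝ) * (Real.sin lam.im)^2 ≤ (5/2) * (5 * d^2) :=
      mul_le_mul_of_nonneg_left hsin2 (by norm_num)
    linarith [h1, h3, h4, sq_nonneg d]
  -- final computation
  have hlam0 : lam ≠ 0 := by
    intro h
    apply hs1
    rw [hlam, h, neg_zero, Complex.exp_zero]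
  have hnsq_pos : 0 < Complex.normSq lam := Complex.normSq_pos.mpr hlam0
  rw [ge_iff_le, show (1:ℂ)/lam = lam⁻¹ from one_div lam, Complex.inv_re,
    div_le_div_iff₀ (by positivity) hnsq_pos]
  have hnsq : Complex.normSq lam = lam.re^2 + lam.im^2 := by
    rw [Complex.normSq_apply, pow_two, pow_two]
  rw [hnsq]
  have hMre : d ≤ M * lam.re :=
    le_trans hd_le (mul_le_mul_of_nonneg_left hre_lb hM0.le)
  have hdd : d * d ≤ M * lam.re * d := mul_le_mul_of_nonneg_right hMre hd_pos.le
  have hre0 : (0:ℝ) ≤ lam.re := by linarith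
  have h5 : lam.re * lam.re ≤ (9/4*d) * (9/4*d) :=
    mul_le_mul hre_ub hre_ub hre0 (by linarith)
  have h6 : lam.re^2 ≤ 81/16 * d^2 := by
    calc lam.re^2 = lam.re * lam.re := by ring
      _ ≤ (9/4*d) * (9/4*d) := h5
      _ = 81/16 * d^2 := by ring
  have h7 : d * d ≤ lam.re * (M * d) := by
    calc d * d ≤ M * lam.re * d := hdd
      _ = lam.re * (M * d) := by ring
  have h8 : d^2 = d * d := by ring
  linarith [him_sq, h6, h7, h8, sq_nonneg d]
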